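/- For every n ≥ 0, C_n = ((-1)^n / n!) · ∑_{m=0}^n 2^{2n-m} · E_m · S₁(n,m), where E_m are Euler numbers and S₁(n,m) signed Stirling numbers of the first kind. -/

import Mathlib

open Finset Polynomial

/-- Signed Stirling numbers of the first kind. -/
noncomputable def stirling1 (n m : ℕ) : ℚ :=
  (∏ i ∈ Finset.range n, (Polynomial.X - Polynomial.C (i : ℚ))).coeff m


noncomputable def Lfun (E : ℕ → ℚ) (f : ℚ[X]) : ℚ := f.sum fun m c => c * E m

lemma Lfun_add (E : ℕ → ℚ) (f g : ℚ[X]) : Lfun E (f + g) = Lfun E f + Lfun E g := by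
  unfold Lfun
  exact Polynomial.sum_add_index f g _ (fun i => by simp) (fun i b c => by ring)

lemma Lfun_smul (E : ℕ → ℚ) (c : ℚ) (f : ℚ[X]) : Lfun E (c • f) = c * Lfun E f := by
  unfold Lfun
  rw [Polynomial.sum_smul_index f c _ (by simp)]
  simp only [Polynomial.sum_def, Finset.mul_sum]
  apply Finset.sum_congr rfl
  intro i hi; ring

lemma Lfun_sum (E : ℕ → ℚ) {ι : Type*} (s : Finset ι) (f : ι → ℚ[X]) :
    Lfun E (∑ i ∈ s, f i) = ∑ i ∈ s, Lfun E (f i) := by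
  classical
  induction s using Finset.cons_induction with
  | empty => simp [Lfun]
  | cons a s ha ih => rw [Finset.sum_cons, Finset.sum_cons, Lfun_add, ih]

lemma Lfun_eq_range (E : ℕ → ℚ) (f : ℚ[X]) (N : ℕ) (h : f.natDegree < N) :
    Lfun E f = ∑ m ∈ range N, f.coeff m * E m :=
  Polynomial.sum_over_range' f (fun n => by simp) N h

lemma Lfun_monomial (E : ℕ → ℚ) (k : ℕ) (c : ℚ) : Lfun E (monomial k c) = c * E k := by
  unfold Lfun
  exact Polynomial.sum_monomial_index c _ (by simp)

lemma euler_rec (E : ℕ → ℚ)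
    (hE : (PowerSeries.mk fun m => E m / (m.factorial : ℚ)) * (PowerSeries.exp ℚ + 1) = 2)
    (k : ℕ) :
    (∑ j ∈ range (k + 1), (k.choose j : ℚ) * E j) + E k = if k = 0 then 2 else 0 := by
  have h := congrArg (PowerSeries.coeff k) hE
  rw [PowerSeries.coeff_mul, Finset.Nat.sum_antidiagonal_eq_sum_range_succ_mk] at h
  simp only [PowerSeries.coeff_mk, map_add, PowerSeries.coeff_exp, PowerSeries.coeff_one,
    Algebra.algebraMap_self, RingHom.id_apply] at h
  have h2 : (PowerSeries.coeff k) (2 : PowerSeries ℚ) = if k = 0 then 2 else 0 := by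
    have : (2 : PowerSeries ℚ) = PowerSeries.C (2 : ℚ) := by rw [map_ofNat]
    rw [this, PowerSeries.coeff_C]
  rw [h2] at h
  have h3 : ∀ x ∈ range k.succ,
      E x / x.factorial * (1 / ((k-x).factorial : ℚ) + if k - x = 0 then 1 else 0)
      = E x / x.factorial * (1 / ((k-x).factorial : ℚ)) + (if x = k then E k / k.factorial else 0) := by
    intro x hx
    rcases eq_or_ne x k with rfl | hxk
    · simp [mul_add]
    · have hne : k - x ≠ 0 := by have := mem_range.1 hx; omega
      simp [hne, hxk]
  rw [Finset.sum_congr rfl h3, Finset.sum_add_distrib, Finset.sum_ite_eq' (range k.succ)] at h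
  rw [if_pos (Finset.self_mem_range_succ k)] at h
  have hk : (k.factorial : ℚ) ≠ 0 := by exact_mod_cast k.factorial_ne_zero
  have key : (∑ j ∈ range (k + 1), (k.choose j : ℚ) * E j) + E k
      = k.factorial * ((∑ x ∈ range (k+1), E x / x.factorial * (1 / ((k-x).factorial : ℚ))) + E k / k.factorial) := by
    rw [mul_add, Finset.mul_sum]
    congr 1
    · apply Finset.sum_congr rfl
      intro x hx
      have hxk : x ≤ k := by have := mem_range.1 hx; omega
      rw [Nat.cast_choose ℚ hxk]
      have hx0 : (x.factorial : ℚ) ≠ 0 := by exact_mod_cast x.factorial_ne_zero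
      have hkx0 : ((k-x).factorial : ℚ) ≠ 0 := by exact_mod_cast (k-x).factorial_ne_zero
      field_simp
    · field_simp
  rw [key, h]
  rcases eq_or_ne k 0 with rfl | hk0
  · simp
  · simp [hk0]


lemma Lfun_funceq (E : ℕ → ℚ)
    (hrec : ∀ k, (∑ j ∈ range (k + 1), (k.choose j : ℚ) * E j) + E k = if k = 0 then 2 else 0)
    (f : ℚ[X]) : Lfun E (f.comp (X + 1)) + Lfun E f = 2 * f.eval 0 := by
  induction f using Polynomial.induction_on' with
  | add p q hp hq =>
    rw [add_comp, Lfun_add, Lfun_add, eval_add]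
    ring_nf
    ring_nf at hp hq
    linarith
  | monomial k c =>
    rw [monomial_comp, ← smul_eq_C_mul, Lfun_smul]
    have h1 : Lfun E ((X + 1) ^ k) = ∑ j ∈ range (k + 1), (k.choose j : ℚ) * E j := by
      rw [Lfun_eq_range E _ (k + 1)]
      · apply Finset.sum_congr rfl
        intro j hj
        rw [coeff_X_add_one_pow]
      · calc ((X + 1 : ℚ[X]) ^ k).natDegree ≤ k * (X + 1 : ℚ[X]).natDegree := natDegree_pow_le
          _ ≤ k * 1 := by
              apply Nat.mul_le_mul_left
              have : (X + 1 : ℚ[X]) = X + C 1 := by norm_num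
              rw [this, natDegree_X_add_C]
          _ < k + 1 := by omega
    rw [h1, Lfun_monomial]
    have h2 : ((monomial k) c).eval 0 = if k = 0 then c else 0 := by
      rw [eval_monomial]
      rcases eq_or_ne k 0 with rfl | hk
      · simp
      · simp [hk, zero_pow]
    rw [h2]
    have h3 := hrec k
    rw [← mul_add, h3]
    rcases eq_or_ne k 0 with rfl | hk
    · simp; ring
    · simp [hk]


lemma dp_comp_add_one (n : ℕ) :
    (descPochhammer ℚ (n + 1)).comp (X + 1) = (X + 1) * descPochhammer ℚ n := by
  rw [descPochhammer_succ_left, mul_comp, X_comp, Polynomial.comp_assoc]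
  congr 2
  simp

lemma dp_comp_eq (n : ℕ) :
    (descPochhammer ℚ (n + 1)).comp (X + 1)
      = descPochhammer ℚ (n + 1) + ((n : ℚ) + 1) • descPochhammer ℚ n := by
  rw [dp_comp_add_one, descPochhammer_succ_right, smul_eq_C_mul]
  have h1 : (C ((n : ℚ) + 1)) = ((n : ℚ[X]) + 1) := by
    simp only [map_add, map_one, Polynomial.C_eq_natCast]
  rw [h1]
  ring

lemma Lfun_one (E : ℕ → ℚ)
    (hrec : ∀ k, (∑ j ∈ range (k + 1), (k.choose j : ℚ) * E j) + E k = if k = 0 then 2 else 0) :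
    Lfun E 1 = 1 := by
  have h0 := hrec 0
  simp at h0
  have : Lfun E 1 = E 0 := by
    unfold Lfun
    have : (1 : ℚ[X]) = monomial 0 1 := by simp
    rw [this, Polynomial.sum_monomial_index 1 _ (by simp), one_mul]
  rw [this]; linarith

lemma Lfun_dp (E : ℕ → ℚ)
    (hrec : ∀ k, (∑ j ∈ range (k + 1), (k.choose j : ℚ) * E j) + E k = if k = 0 then 2 else 0) :
    ∀ k, Lfun E (descPochhammer ℚ k) = (-1/2) ^ k * k.factorial := by
  intro k
  induction k with
  | zero => simpa [descPochhammer_zero] using Lfun_one E hrec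
  | succ n ih =>
    have h := Lfun_funceq E hrec (descPochhammer ℚ (n + 1))
    rw [dp_comp_eq, Lfun_add, Lfun_smul, ih] at h
    rw [descPochhammer_ne_zero_eval_zero (R := ℚ) (n := n+1) (Nat.succ_ne_zero n)] at h
    rw [mul_zero] at h
    have : Lfun E (descPochhammer ℚ (n + 1))
        = -(((n : ℚ) + 1) * ((-1/2) ^ n * n.factorial)) / 2 := by linarith
    rw [this, Nat.factorial_succ]
    push_cast
    ring


noncomputable def Qp (n : ℕ) : ℚ[X] := ∏ i ∈ range n, (X - C (2 * i : ℚ))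

lemma dp_eq_prod (n : ℕ) :
    descPochhammer ℚ n = ∏ i ∈ range n, (X - C (i : ℚ)) := by
  induction n with
  | zero => simp [descPochhammer_zero]
  | succ m ih =>
    rw [descPochhammer_succ_right, ih, Finset.prod_range_succ]
    congr 1

lemma stirling1_eq_dp_coeff (n m : ℕ) : stirling1 n m = (descPochhammer ℚ n).coeff m := by
  rw [dp_eq_prod]; rfl

lemma Qp_natDegree (n : ℕ) : (Qp n).natDegree = n := by
  unfold Qp
  rw [Polynomial.natDegree_prod_of_monic _ _ (fun i _ => monic_X_sub_C _)]
  simp only [natDegree_X_sub_C]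
  simp

lemma Qp_monic (n : ℕ) : (Qp n).Monic :=
  monic_prod_of_monic _ _ (fun i _ => monic_X_sub_C _)

lemma coeff_mul_X_sub_C' (p : ℚ[X]) (a : ℚ) (m : ℕ) :
    (p * (X - C a)).coeff m = (if m = 0 then 0 else p.coeff (m - 1)) - a * p.coeff m := by
  rw [mul_sub, coeff_sub]
  congr 1
  · cases m with
    | zero =>
      simp only [if_pos rfl]
      have := Polynomial.coeff_mul_X_pow' p 1 0
      simpa using this
    | succ k => rw [Polynomial.coeff_mul_X]; simp
  · rw [Polynomial.coeff_mul_C]; ring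

lemma Qp_coeff (n : ℕ) : ∀ m, (Qp n).coeff m = 2 ^ (n - m) * stirling1 n m := by
  induction n with
  | zero =>
    intro m
    unfold Qp stirling1
    cases m with
    | zero => simp
    | succ k => simp
  | succ n ih =>
    intro m
    have hQ : Qp (n + 1) = Qp n * (X - C (2 * n : ℚ)) := by
      unfold Qp; rw [Finset.prod_range_succ]
    have hS : ∀ j, stirling1 (n + 1) j
        = (if j = 0 then 0 else stirling1 n (j - 1)) - n * stirling1 n j := by
      intro j
      unfold stirling1
      rw [Finset.prod_range_succ, coeff_mul_X_sub_C']
    rw [hQ, coeff_mul_X_sub_C', hS m]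
    cases m with
    | zero =>
      rw [if_pos rfl, if_pos rfl, ih 0, Nat.sub_zero, Nat.sub_zero, pow_succ]
      ring
    | succ m' =>
      rw [if_neg (Nat.succ_ne_zero m'), if_neg (Nat.succ_ne_zero m'), Nat.add_sub_cancel]
      rw [ih m', ih (m' + 1)]
      rcases lt_or_ge m' n with hlt | hge
      · have e1 : n + 1 - (m' + 1) = n - m' := by omega
        have e2 : n - m' = (n - (m' + 1)) + 1 := by omega
        rw [e1, e2, pow_succ]
        ring
      · -- m' ≥ n : high coefficients vanish
        have z1 : stirling1 n (m' + 1) = 0 := by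
          rw [stirling1_eq_dp_coeff]
          apply Polynomial.coeff_eq_zero_of_natDegree_lt
          rw [descPochhammer_natDegree]
          omega
        have e1 : n + 1 - (m' + 1) = n - m' := by omega
        rw [z1, e1]
        ring

lemma coeff_two_X_add_one_pow (M k : ℕ) :
    ((2 * X + 1 : ℚ[X]) ^ M).coeff k = 2 ^ k * M.choose k := by
  have h1 : ((2 * X + 1 : ℚ[X])) ^ M
      = ∑ j ∈ range (M + 1), C ((2:ℚ) ^ j * M.choose j) * X ^ j := by
    rw [add_pow]
    apply Finset.sum_congr rfl
    intro j hj
    rw [mul_pow, one_pow]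
    simp only [map_mul, map_pow, map_natCast, map_ofNat]
    ring
  rw [h1, finset_sum_coeff]
  simp only [coeff_C_mul, coeff_X_pow]
  rw [Finset.sum_congr rfl (fun j _ => by rw [mul_ite, mul_one, mul_zero])]
  rw [Finset.sum_ite_eq (range (M + 1)) k]
  rcases le_or_gt k M with h | h
  · rw [if_pos (mem_range.2 (by omega))]
  · rw [if_neg (by simp [mem_range]; omega), Nat.choose_eq_zero_of_lt h]
    simp

lemma choose_sq (N k : ℕ) :
    ∑ n ∈ range (k + 1), (N.choose n : ℚ) * (n.choose (k - n)) * 4 ^ n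
      = 2 ^ k * ((2 * N).choose k) := by
  have base : ((2 * X + 1 : ℚ[X])) ^ (2 * N) = ((4 * (X * (1 + X))) + 1) ^ N := by
    rw [pow_mul]
    congr 1
    ring
  have hL : ((2 * X + 1 : ℚ[X]) ^ (2 * N)).coeff k = 2 ^ k * ((2 * N).choose k) :=
    coeff_two_X_add_one_pow _ _
  have hterm : ∀ n : ℕ, (((4 * (X * (1 + X))) : ℚ[X]) ^ n).coeff k
      = if n ≤ k then (4:ℚ) ^ n * (n.choose (k - n)) else 0 := by
    intro n
    have e : ((4 * (X * (1 + X))) : ℚ[X]) ^ n = C ((4:ℚ) ^ n) * ((1 + X) ^ n * X ^ n) := by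
      rw [mul_pow, mul_pow]
      simp only [map_pow, map_ofNat]
      ring
    rw [e, coeff_C_mul, Polynomial.coeff_mul_X_pow']
    rcases le_or_gt n k with h | h
    · rw [if_pos h, if_pos h, coeff_one_add_X_pow]
    · rw [if_neg (by omega), if_neg (by omega), mul_zero]
  have hR : (((4 * (X * (1 + X))) + 1 : ℚ[X]) ^ N).coeff k
      = ∑ n ∈ range (N + 1), (N.choose n : ℚ) * (if n ≤ k then (4:ℚ) ^ n * (n.choose (k - n)) else 0) := by
    rw [add_pow, finset_sum_coeff]
    apply Finset.sum_congr rfl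
    intro j hj
    rw [one_pow, mul_one, ← Polynomial.C_eq_natCast, coeff_mul_C, hterm j]
    ring
  rw [base, hR] at hL
  -- now identify the two sums
  have ext1 : ∑ n ∈ range (k + 1), (N.choose n : ℚ) * (n.choose (k - n)) * 4 ^ n
      = ∑ n ∈ range (k + 1), (N.choose n : ℚ) * (if n ≤ k then (4:ℚ) ^ n * (n.choose (k - n)) else 0) := by
    apply Finset.sum_congr rfl
    intro n hn
    rw [if_pos (by exact Nat.lt_succ_iff.mp (mem_range.mp hn))]
    ring
  have ext2 : ∑ n ∈ range (N + k + 2), (N.choose n : ℚ) * (if n ≤ k then (4:ℚ) ^ n * (n.choose (k - n)) else 0)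
      = ∑ n ∈ range (N + 1), (N.choose n : ℚ) * (if n ≤ k then (4:ℚ) ^ n * (n.choose (k - n)) else 0) := by
    symm
    apply Finset.sum_subset
    · apply Finset.range_subset_range.2; omega
    · intro x hx hx2
      rw [Nat.choose_eq_zero_of_lt (by simp [mem_range] at hx2 ⊢; omega)]
      simp
  have ext3 : ∑ n ∈ range (N + k + 2), (N.choose n : ℚ) * (if n ≤ k then (4:ℚ) ^ n * (n.choose (k - n)) else 0)
      = ∑ n ∈ range (k + 1), (N.choose n : ℚ) * (if n ≤ k then (4:ℚ) ^ n * (n.choose (k - n)) else 0) := by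
    symm
    apply Finset.sum_subset
    · apply Finset.range_subset_range.2; omega
    · intro x hx hx2
      rw [if_neg (by simp [mem_range] at hx2 ⊢; omega)]
      simp
  rw [ext1, ← ext3, ext2, ← hL]


lemma Qp_eval (n N : ℕ) : (Qp n).eval (2 * (N : ℚ)) = 2 ^ n * (N.descFactorial n : ℚ) := by
  unfold Qp
  rw [eval_prod]
  have h1 : ∀ i ∈ range n, ((X - C (2 * i : ℚ)).eval (2 * (N:ℚ))) = 2 * ((N:ℚ) - i) := by
    intro i hi; simp; ring
  rw [Finset.prod_congr rfl h1, Finset.prod_mul_distrib, Finset.prod_const, card_range]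
  congr 1
  have h2 : ∏ i ∈ range n, ((N:ℚ) - i) = (descPochhammer ℚ n).eval (N : ℚ) := by
    rw [dp_eq_prod, eval_prod]
    apply Finset.prod_congr rfl
    intro i hi; simp
  rw [h2, descPochhammer_eval_eq_descFactorial]

lemma key_poly (k : ℕ) :
    ∑ n ∈ range (k + 1), ((k.factorial : ℚ) / n.factorial * (n.choose (k - n)) / 2 ^ (k - n)) • Qp n
      = descPochhammer ℚ k := by
  apply Polynomial.eq_of_infinite_eval_eq
  have hinj : Function.Injective (fun N : ℕ => 2 * (N : ℚ)) := by
    intro a b h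
    field_simp at h
    exact_mod_cast h
  apply (Set.infinite_range_of_injective hinj).mono
  rintro x ⟨N, rfl⟩
  simp only [Set.mem_setOf_eq, eval_finset_sum, eval_smul, smul_eq_mul]
  have hpt : (2 * (N:ℚ)) = ((2 * N : ℕ) : ℚ) := by push_cast; ring
  rw [hpt, descPochhammer_eval_eq_descFactorial]
  rw [← hpt]
  have key : ∀ n ∈ range (k + 1),
      (k.factorial : ℚ) / n.factorial * (n.choose (k - n)) / 2 ^ (k - n) * (Qp n).eval (2 * (N:ℚ))
      = (k.factorial : ℚ) / 2 ^ k * ((N.choose n) * (n.choose (k - n)) * 4 ^ n) := by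
    intro n hn
    have hnk : n ≤ k := Nat.lt_succ_iff.mp (mem_range.mp hn)
    rw [Qp_eval, Nat.descFactorial_eq_factorial_mul_choose]
    have h4 : (4 : ℚ) ^ n = 2 ^ n * 2 ^ n := by rw [show (4:ℚ) = 2 * 2 by norm_num, mul_pow]
    have h2k : (2 : ℚ) ^ k = 2 ^ (k - n) * 2 ^ n := by rw [← pow_add]; congr 1; omega
    have hfn : (n.factorial : ℚ) ≠ 0 := by exact_mod_cast n.factorial_ne_zero
    rw [h4, h2k]
    push_cast
    field_simp
  rw [Finset.sum_congr rfl key, ← Finset.mul_sum, choose_sq,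
    Nat.descFactorial_eq_factorial_mul_choose]
  push_cast
  field_simp

noncomputable def Pc (K : ℕ) : ℚ[X] := ∑ n ∈ range (K + 1), (catalan n : ℚ) • (-(X + X ^ 2)) ^ n

lemma Zcoeff (m j : ℕ) : ((-(X + X ^ 2) : ℚ[X]) ^ m).coeff j
    = if m ≤ j then (-1 : ℚ) ^ m * (m.choose (j - m)) else 0 := by
  have e : (-(X + X ^ 2) : ℚ[X]) ^ m = C ((-1:ℚ) ^ m) * ((1 + X) ^ m * X ^ m) := by
    rw [show (-(X + X ^ 2) : ℚ[X]) = (-1) * ((1 + X) * X) by ring, mul_pow, mul_pow]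
    congr 1
    simp only [map_pow, map_neg, map_one]
  rw [e, coeff_C_mul, Polynomial.coeff_mul_X_pow']
  rcases le_or_gt m j with h | h
  · rw [if_pos h, if_pos h, coeff_one_add_X_pow]
  · rw [if_neg (by omega), if_neg (by omega), mul_zero]

lemma Pc_coeff (K j : ℕ) (h : j ≤ K) :
    (Pc K).coeff j = ∑ n ∈ range (j + 1), (-1 : ℚ) ^ n * (n.choose (j - n)) * catalan n := by
  unfold Pc
  rw [finset_sum_coeff]
  simp only [coeff_smul, Zcoeff, smul_eq_mul]
  rw [← Finset.sum_subset (Finset.range_subset_range.2 (by omega) : range (j + 1) ⊆ range (K + 1))]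
  · apply Finset.sum_congr rfl
    intro n hn
    rw [if_pos (Nat.lt_succ_iff.mp (mem_range.mp hn))]
    ring
  · intro x hx hx2
    rw [if_neg (by simp [mem_range] at hx2 ⊢; omega)]
    simp

lemma catalan_alt (k : ℕ) :
    ∑ n ∈ range (k + 1), (-1 : ℚ) ^ n * (n.choose (k - n)) * catalan n = (-1) ^ k := by
  induction k using Nat.strong_induction_on with
  | _ k IH =>
  obtain _ | _ | j := k
  · simp
  · rw [Finset.sum_range_succ, Finset.sum_range_succ, Finset.sum_range_zero]
    norm_num
  · -- k = j + 2
    set K := j + 1 with hK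
    set z : ℚ[X] := -(X + X ^ 2) with hz
    have hPcc : ∀ a, a ≤ K → (Pc K).coeff a = (-1 : ℚ) ^ a := by
      intro a ha
      rw [Pc_coeff K a ha]
      exact IH a (by omega)
    have hW : ∀ i, i ≤ K → (Pc K * Pc K).coeff i = ((i : ℚ) + 1) * (-1) ^ i := by
      intro i hi
      rw [Polynomial.coeff_mul, Finset.Nat.sum_antidiagonal_eq_sum_range_succ_mk]
      have hterm : ∀ p ∈ range (i + 1),
          (Pc K).coeff p * (Pc K).coeff (i - p) = (-1 : ℚ) ^ i := by
        intro p hp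
        have hp' : p ≤ i := Nat.lt_succ_iff.mp (mem_range.mp hp)
        rw [hPcc p (by omega), hPcc (i - p) (by omega), ← pow_add]
        congr 1
        omega
      rw [Finset.sum_congr rfl hterm, Finset.sum_const, card_range, nsmul_eq_mul]
      push_cast
      ring
    -- coefficient of z * (Pc K)^2 at j+2, computed two ways
    have way1 : (z * (Pc K * Pc K)).coeff (j + 2) = (-1 : ℚ) ^ (j + 2) := by
      have e : z * (Pc K * Pc K) = -(X * (Pc K * Pc K)) - X ^ 2 * (Pc K * Pc K) := by
        rw [hz]; ring
      rw [e, coeff_sub, coeff_neg]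
      rw [show j + 2 = (j + 1) + 1 from rfl, Polynomial.coeff_X_mul]
      have e2 : (X ^ 2 * (Pc K * Pc K)).coeff (j + 2) = (Pc K * Pc K).coeff j := by
        have h := Polynomial.coeff_X_pow_mul (Pc K * Pc K) 2 j
        rw [← h]
      rw [e2, hW (j + 1) (by omega), hW j (by omega)]
      push_cast
      ring
    have expand : z * (Pc K * Pc K)
        = ∑ a ∈ range (K + 1), ∑ b ∈ range (K + 1),
            ((catalan a : ℚ) * (catalan b : ℚ)) • z ^ (a + b + 1) := by
      unfold Pc
      rw [Finset.sum_mul_sum, Finset.mul_sum]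
      apply Finset.sum_congr rfl
      intro a ha
      rw [Finset.mul_sum]
      apply Finset.sum_congr rfl
      intro b hb
      simp only [smul_eq_C_mul, map_mul]
      ring
    have way2 : (z * (Pc K * Pc K)).coeff (j + 2)
        = ∑ a ∈ range (K + 1), ∑ b ∈ range (K + 1),
            (catalan a : ℚ) * (catalan b : ℚ) *
              (if a + b + 1 ≤ j + 2 then (-1 : ℚ) ^ (a + b + 1) * ((a + b + 1).choose (j + 2 - (a + b + 1))) else 0) := by
      rw [expand, finset_sum_coeff]
      apply Finset.sum_congr rfl
      intro a ha
      rw [finset_sum_coeff]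
      apply Finset.sum_congr rfl
      intro b hb
      rw [coeff_smul, hz, Zcoeff, smul_eq_mul]
    -- triangle reindexing
    set s : ℕ → ℚ := fun m =>
      if m + 1 ≤ j + 2 then (-1 : ℚ) ^ (m + 1) * ((m + 1).choose (j + 2 - (m + 1))) else 0 with hs
    set F : ℕ × ℕ → ℚ := fun p => (catalan p.1 : ℚ) * (catalan p.2 : ℚ) * s (p.1 + p.2) with hF
    have way2' : (z * (Pc K * Pc K)).coeff (j + 2)
        = ∑ p ∈ range (K + 1) ×ˢ range (K + 1), F p := by
      rw [way2, Finset.sum_product]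
    have hDsub : (range (K + 1)).biUnion (fun m => Finset.HasAntidiagonal.antidiagonal m)
        ⊆ range (K + 1) ×ˢ range (K + 1) := by
      intro p hp
      rw [Finset.mem_biUnion] at hp
      obtain ⟨m, hm, hpm⟩ := hp
      rw [Finset.HasAntidiagonal.mem_antidiagonal] at hpm
      rw [Finset.mem_range] at hm
      rw [Finset.mem_product, Finset.mem_range, Finset.mem_range]
      omega
    have hzero : ∀ p ∈ range (K + 1) ×ˢ range (K + 1),
        p ∉ (range (K + 1)).biUnion (fun m => Finset.HasAntidiagonal.antidiagonal m) → F p = 0 := by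
      intro p hp hnp
      have hbig : K < p.1 + p.2 := by
        by_contra hc
        push_neg at hc
        exact hnp (Finset.mem_biUnion.2 ⟨p.1 + p.2, Finset.mem_range.2 (by omega),
          Finset.HasAntidiagonal.mem_antidiagonal.2 rfl⟩)
      have : s (p.1 + p.2) = 0 := by rw [hs]; simp only; rw [if_neg (by omega)]
      rw [hF]; simp only; rw [this, mul_zero]
    have hdisj : (↑(range (K + 1)) : Set ℕ).PairwiseDisjoint
        (fun m => (Finset.HasAntidiagonal.antidiagonal m : Finset (ℕ × ℕ))) := by
      intro a _ b _ hab
      simp only [Function.onFun]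
      rw [Finset.disjoint_left]
      intro p hpa hpb
      rw [Finset.HasAntidiagonal.mem_antidiagonal] at hpa hpb
      exact hab (by omega)
    have way3 : (z * (Pc K * Pc K)).coeff (j + 2)
        = ∑ m ∈ range (K + 1), (catalan (m + 1) : ℚ) * s m := by
      rw [way2', ← Finset.sum_subset hDsub hzero, Finset.sum_biUnion hdisj]
      apply Finset.sum_congr rfl
      intro m hm
      have hinner : ∀ p ∈ Finset.HasAntidiagonal.antidiagonal m, F p = (catalan p.1 : ℚ) * (catalan p.2 : ℚ) * s m := by
        intro p hp
        rw [Finset.HasAntidiagonal.mem_antidiagonal] at hp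
        rw [hF]; simp only; rw [hp]
      rw [Finset.sum_congr rfl hinner, ← Finset.sum_mul]
      congr 1
      rw [catalan_succ']
      push_cast
      rfl
    -- conclude
    rw [Finset.sum_range_succ']
    have hf0 : (-1 : ℚ) ^ 0 * ((Nat.choose 0 (j + 2 - 0)) : ℚ) * catalan 0 = 0 := by
      rw [Nat.choose_eq_zero_of_lt (by omega)]
      simp
    rw [hf0, add_zero]
    rw [way3] at way1
    rw [← way1]
    apply Finset.sum_congr rfl
    intro m hm
    have hm' : m ≤ K := Nat.lt_succ_iff.mp (mem_range.mp hm)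
    rw [hs]; simp only
    rw [if_pos (by omega)]
    ring

lemma Lfun_Qp (E : ℕ → ℚ)
    (hrec : ∀ k, (∑ j ∈ range (k + 1), (k.choose j : ℚ) * E j) + E k = if k = 0 then 2 else 0) :
    ∀ k, Lfun E (Qp k) = (-1) ^ k * k.factorial * catalan k / 2 ^ k := by
  intro k
  induction k using Nat.strong_induction_on with
  | _ k IH =>
  have hkey := congrArg (Lfun E) (key_poly k)
  rw [Lfun_sum, Lfun_dp E hrec k] at hkey
  rw [Finset.sum_congr rfl (fun n _ => Lfun_smul E _ (Qp n))] at hkey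
  have hB : ∑ n ∈ range (k + 1),
      (k.factorial : ℚ) / n.factorial * (n.choose (k - n)) / 2 ^ (k - n) *
        ((-1) ^ n * n.factorial * catalan n / 2 ^ n)
      = (-1 / 2) ^ k * k.factorial := by
    have hterm : ∀ n ∈ range (k + 1),
        (k.factorial : ℚ) / n.factorial * (n.choose (k - n)) / 2 ^ (k - n) *
          ((-1) ^ n * n.factorial * catalan n / 2 ^ n)
        = (k.factorial : ℚ) / 2 ^ k * ((-1) ^ n * (n.choose (k - n)) * catalan n) := by
      intro n hn
      have hnk : n ≤ k := Nat.lt_succ_iff.mp (mem_range.mp hn)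
      have h2k : (2 : ℚ) ^ k = 2 ^ (k - n) * 2 ^ n := by rw [← pow_add]; congr 1; omega
      have hfn : (n.factorial : ℚ) ≠ 0 := by exact_mod_cast n.factorial_ne_zero
      rw [h2k]
      field_simp
    rw [Finset.sum_congr rfl hterm, ← Finset.mul_sum, catalan_alt k, div_pow, neg_pow]
    field_simp
  rw [Finset.sum_range_succ] at hkey
  rw [Finset.sum_range_succ] at hB
  have hck : (k.factorial : ℚ) / k.factorial * ((k.choose (k - k)) : ℚ) / 2 ^ (k - k) = 1 := by
    have hfk : (k.factorial : ℚ) ≠ 0 := by exact_mod_cast k.factorial_ne_zero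
    rw [Nat.sub_self]
    simp [div_self hfk]
  rw [hck, one_mul] at hkey hB
  have hIHsum : ∑ n ∈ range k,
      (k.factorial : ℚ) / n.factorial * (n.choose (k - n)) / 2 ^ (k - n) * Lfun E (Qp n)
      = ∑ n ∈ range k,
      (k.factorial : ℚ) / n.factorial * (n.choose (k - n)) / 2 ^ (k - n) *
        ((-1) ^ n * n.factorial * catalan n / 2 ^ n) := by
    apply Finset.sum_congr rfl
    intro n hn
    rw [IH n (mem_range.mp hn)]
  rw [hIHsum] at hkey
  linarith

/-- `C_n = ((-1)^n/n!) ∑_{m=0}^n 2^{2n-m} E_m S₁(n,m)` for Euler numbers `E`. -/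
theorem catalan_eq_sum_euler_stirling1 (E : ℕ → ℚ)
    (hE : (PowerSeries.mk fun m => E m / (m.factorial : ℚ)) * (PowerSeries.exp ℚ + 1) = 2)
    (n : ℕ) :
    (catalan n : ℚ) = (-1) ^ n / (n.factorial : ℚ) *
      ∑ m ∈ Finset.range (n + 1), (2 : ℚ) ^ (2 * n - m) * E m * stirling1 n m := by
  have hrec := euler_rec E hE
  have hsum : ∑ m ∈ Finset.range (n + 1), (2 : ℚ) ^ (2 * n - m) * E m * stirling1 n m
      = 2 ^ n * Lfun E (Qp n) := by
    rw [Lfun_eq_range E (Qp n) (n + 1) (by rw [Qp_natDegree]; omega), Finset.mul_sum]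
    apply Finset.sum_congr rfl
    intro m hm
    have hmn : m ≤ n := Nat.lt_succ_iff.mp (mem_range.mp hm)
    rw [Qp_coeff n m]
    have h2 : (2 : ℚ) ^ (2 * n - m) = 2 ^ n * 2 ^ (n - m) := by rw [← pow_add]; congr 1; omega
    rw [h2]
    ring
  rw [hsum, Lfun_Qp E hrec n]
  have hfac : (n.factorial : ℚ) ≠ 0 := by exact_mod_cast n.factorial_ne_zero
  have hneg : (-1 : ℚ) ^ n * (-1) ^ n = 1 := by
    rw [← pow_add]
    exact Even.neg_one_pow ⟨n, rfl⟩
  have h2n : (2 : ℚ) ^ n ≠ 0 := by positivity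
  have hneg2 : ((-1 : ℚ)) ^ (n * 2) = 1 := by rw [mul_comm n 2, pow_mul]; norm_num
  field_simp
  linear_combination (-(catalan n : ℚ)) * hneg2
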